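/- Green's formula for the degenerate operator: if u ∈ H²_{1/σ}(0,1) and v ∈ H¹_{1/σ}(0,1), then ∫₀¹ (Au)(x) v(x) (1/σ(x)) dx = − ∫₀¹ η(x) u'(x) v'(x) dx, where Au = σ(ηu')'. -/

import Mathlib

open Set MeasureTheory Filter
open scoped Topology
open scoped Interval

/-- Cauchy–Schwarz: `∫_s |f| ≤ √(vol s) * √(∫_s f²)`. -/
private lemma cs_aux {f : ℝ → ℝ} {s : Set ℝ}
    (hvol : volume s ≠ ⊤)
    (hfm : AEStronglyMeasurable f (volume.restrict s))
    (hf2 : IntegrableOn (fun x => f x ^ 2) s) :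
    ∫ x in s, |f x| ≤ Real.sqrt (volume s).toReal * Real.sqrt (∫ x in s, f x ^ 2) := by
  set μ := volume.restrict s with hμdef
  haveI : IsFiniteMeasure μ := ⟨by
    rw [hμdef, Measure.restrict_apply_univ]; exact lt_top_iff_ne_top.2 hvol⟩
  have hpq : Real.HolderConjugate 2 2 := Real.holderConjugate_iff.mpr ⟨one_lt_two, by norm_num⟩
  have hf : MemLp f (ENNReal.ofReal 2) μ := by
    rw [show ENNReal.ofReal 2 = 2 by norm_num]
    exact (memLp_two_iff_integrable_sq hfm).2 hf2
  have hg : MemLp (fun _ : ℝ => (1 : ℝ)) (ENNReal.ofReal 2) μ := memLp_const 1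
  have h := integral_mul_norm_le_Lp_mul_Lq hpq hf hg
  simp only [norm_one, mul_one, Real.norm_eq_abs] at h
  have h1 : ∫ a, |f a| ^ (2:ℝ) ∂μ = ∫ a, f a ^ 2 ∂μ := by
    refine integral_congr_ae (ae_of_all _ fun a => ?_)
    have e : |f a| ^ (2:ℝ) = |f a| ^ (2:ℕ) := by
      rw [← Real.rpow_natCast]; norm_num
    simp only [e, sq_abs]
  have h2 : ∫ _a, (1:ℝ) ^ (2:ℝ) ∂μ = (volume s).toReal := by
    simp [hμdef, Measure.restrict_apply_univ, Measure.real]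
  rw [h1, h2] at h
  have h3 : (∫ a, f a ^ 2 ∂μ) ^ (1/2 : ℝ) = Real.sqrt (∫ a, f a ^ 2 ∂μ) := by
    rw [Real.sqrt_eq_rpow]
  have h4 : (volume s).toReal ^ (1/2 : ℝ) = Real.sqrt (volume s).toReal := by
    rw [Real.sqrt_eq_rpow]
  rw [h3, h4] at h
  calc ∫ x in s, |f x| ≤ Real.sqrt (∫ a, f a ^ 2 ∂μ) * Real.sqrt (volume s).toReal := h
  _ = Real.sqrt (volume s).toReal * Real.sqrt (∫ x in s, f x ^ 2) := mul_comm _ _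

private lemma not_int_inv {δ : ℝ} (hδ : 0 < δ) :
    ¬ IntegrableOn (fun x : ℝ => x⁻¹) (Ioo 0 δ) := by
  intro h
  have h' : IntegrableOn (fun x : ℝ => x ^ (-1 : ℝ)) (Ioo 0 δ) := by
    refine h.congr_fun (fun x hx => ?_) measurableSet_Ioo
    rw [Real.rpow_neg_one]
  have := (intervalIntegral.integrableOn_Ioo_rpow_iff hδ).1 h'
  linarith

/-- if `g²` is integrable near `0`, then `x g(x)²` is frequently small near 0. -/
private lemma freq_small_zero {g : ℝ → ℝ} (hg : IntegrableOn (fun x => g x ^ 2) (Ioo 0 1))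
    {ε δ : ℝ} (hε : 0 < ε) (hδ : δ ∈ Ioo (0:ℝ) 1) :
    ∃ x ∈ Ioo 0 δ, x * g x ^ 2 < ε := by
  by_contra hcon
  push_neg at hcon
  have hgδ : IntegrableOn (fun x => g x ^ 2) (Ioo 0 δ) :=
    hg.mono_set (Ioo_subset_Ioo le_rfl hδ.2.le)
  have hint : IntegrableOn (fun x : ℝ => ε * x⁻¹) (Ioo 0 δ) := by
    refine Integrable.mono' hgδ ?_ ?_
    · exact ((measurable_const.mul measurable_inv).aestronglyMeasurable)
    · refine (ae_restrict_iff' measurableSet_Ioo).2 (ae_of_all _ fun x hx => ?_)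
      have hx0 : 0 < x := hx.1
      have := hcon x hx
      rw [Real.norm_eq_abs, abs_of_nonneg (by positivity)]
      rw [mul_inv_le_iff₀ hx0] -- ε ≤ g x ^2 * x ?
      nlinarith
  have : IntegrableOn (fun x : ℝ => x⁻¹) (Ioo 0 δ) := by
    have h2 : IntegrableOn (fun x : ℝ => ε⁻¹ * (ε * x⁻¹)) (Ioo 0 δ) := hint.const_mul ε⁻¹
    refine h2.congr_fun (fun x _ => ?_) measurableSet_Ioo
    field_simp
  exact not_int_inv hδ.1 this

/-- mirror version near `1`. -/
private lemma freq_small_one {g : ℝ → ℝ} (hg : IntegrableOn (fun x => g x ^ 2) (Ioo 0 1))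
    {ε δ : ℝ} (hε : 0 < ε) (hδ : δ ∈ Ioo (0:ℝ) 1) :
    ∃ x ∈ Ioo (1 - δ) 1, (1 - x) * g x ^ 2 < ε := by
  by_contra hcon
  push_neg at hcon
  have hsub : Ioo (1 - δ) 1 ⊆ Ioo 0 1 := Ioo_subset_Ioo (by linarith [hδ.2]) le_rfl
  have hgδ : IntegrableOn (fun x => g x ^ 2) (Ioo (1 - δ) 1) := hg.mono_set hsub
  have hint : IntegrableOn (fun x : ℝ => ε * (1 - x)⁻¹) (Ioo (1 - δ) 1) := by
    refine Integrable.mono' hgδ ?_ ?_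
    · exact ((measurable_const.mul ((measurable_const.sub measurable_id).inv)).aestronglyMeasurable)
    · refine (ae_restrict_iff' measurableSet_Ioo).2 (ae_of_all _ fun x hx => ?_)
      have hx0 : 0 < 1 - x := by linarith [hx.2]
      have := hcon x hx
      rw [Real.norm_eq_abs, abs_of_nonneg (by positivity)]
      rw [mul_inv_le_iff₀ hx0]
      nlinarith
  have hint2 : IntegrableOn (fun x : ℝ => (1 - x)⁻¹) (Ioo (1 - δ) 1) := by
    have h2 : IntegrableOn (fun x : ℝ => ε⁻¹ * (ε * (1 - x)⁻¹)) (Ioo (1-δ) 1) := hint.const_mul ε⁻¹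
    refine h2.congr_fun (fun x _ => ?_) measurableSet_Ioo
    field_simp
  have hii : IntervalIntegrable (fun x : ℝ => (1 - x)⁻¹) volume (1 - δ) 1 :=
    (intervalIntegrable_iff_integrableOn_Ioo_of_le (by linarith [hδ.1])).2 hint2
  have hii2 := hii.comp_sub_left 1
  simp only [sub_sub_cancel, sub_self] at hii2
  -- hii2 : IntervalIntegrable (fun x => (1 - (1 - x))⁻¹) volume δ 0
  have hii3 : IntervalIntegrable (fun x : ℝ => x⁻¹) volume 0 δ := hii2.symm
  exact not_int_inv hδ.1 ((intervalIntegrable_iff_integrableOn_Ioo_of_le hδ.1.le).1 hii3)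

/-- Green's formula: if `u ∈ H²_{1/σ}(0,1)` and
`v ∈ H¹_{1/σ}(0,1)`, then `∫₀¹ (A u) v (1/σ) = − ∫₀¹ η u' v'`, where
`A u = σ (η u')'`, `η = exp ∫_{1/2}^· b/a` and `σ = a/η`. -/
theorem statement10 (a b d : ℝ → ℝ) (K₁ K₂ : ℝ)
    (ha_cont : ContinuousOn a (Icc 0 1)) (hb_cont : ContinuousOn b (Icc 0 1))
    (hd_cont : ContinuousOn d (Icc 0 1))
    (ha0 : a 0 = 0) (hd0 : d 0 = 0)
    (ha_pos : ∀ x ∈ Ioc (0:ℝ) 1, 0 < a x)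
    (hd_pos : ∀ x ∈ Ioc (0:ℝ) 1, 0 < d x)
    (hba : IntegrableOn (fun x => b x / a x) (Ioo 0 1))
    (hK₁ : K₁ ∈ Ioo (0:ℝ) 2) (hK₂ : K₂ ∈ Ioo (0:ℝ) 2) (hsum : K₁ + K₂ ≤ 2)
    (hmona : ∃ δ > 0, MonotoneOn (fun x : ℝ => x ^ K₁ / a x) (Ioo (0:ℝ) δ))
    (hmond : ∃ δ > 0, MonotoneOn (fun x : ℝ => x ^ K₂ / d x) (Ioo (0:ℝ) δ))
    (η σ : ℝ → ℝ)
    (hη : ∀ x, η x = Real.exp (∫ s in (1/2:ℝ)..x, b s / a s))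
    (hσ : ∀ x, σ x = a x / η x)
    -- `u ∈ H²_{1/σ}(0,1)`, with `(η u')' = w`, so `A u = σ w ∈ L²_{1/σ}`
    (u u' w : ℝ → ℝ)
    (hu : ∀ x ∈ Ioo (0:ℝ) 1, HasDerivAt u (u' x) x)
    (hu_cont : ContinuousOn u (Icc 0 1)) (hu0 : u 0 = 0) (hu1 : u 1 = 0)
    (hu'L2 : IntegrableOn (fun x => u' x ^ 2) (Ioo 0 1))
    (huL2σ : IntegrableOn (fun x => u x ^ 2 / σ x) (Ioo 0 1))
    (hw : ∀ x ∈ Ioo (0:ℝ) 1, HasDerivAt (fun t => η t * u' t) (w x) x)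
    (hAu : IntegrableOn (fun x => (σ x * w x) ^ 2 / σ x) (Ioo 0 1))
    -- `v ∈ H¹_{1/σ}(0,1)`
    (v v' : ℝ → ℝ)
    (hv : ∀ x ∈ Ioo (0:ℝ) 1, HasDerivAt v (v' x) x)
    (hv_cont : ContinuousOn v (Icc 0 1)) (hv0 : v 0 = 0) (hv1 : v 1 = 0)
    (hv'L2 : IntegrableOn (fun x => v' x ^ 2) (Ioo 0 1))
    (hvL2σ : IntegrableOn (fun x => v x ^ 2 / σ x) (Ioo 0 1)) :
    ∫ x in (0:ℝ)..1, (σ x * w x) * v x * (1 / σ x) =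
      - ∫ x in (0:ℝ)..1, η x * u' x * v' x := by
  have hIoo : MeasurableSet (Ioo (0:ℝ) 1) := measurableSet_Ioo
  set μ : Measure ℝ := volume.restrict (Ioo 0 1) with hμdef
  -- η is positive and bounded above
  have hηpos : ∀ x, 0 < η x := fun x => (hη x).symm ▸ Real.exp_pos _
  obtain ⟨M, hM0, hMb⟩ : ∃ M > 0, ∀ x ∈ Ioo (0:ℝ) 1, η x ≤ M := by
    refine ⟨Real.exp (∫ s in Ioo (0:ℝ) 1, |b s / a s|), Real.exp_pos _, fun x hx => ?_⟩
    rw [hη x]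
    refine Real.exp_le_exp.2 ?_
    have huIoc : Ι (1/2:ℝ) x ⊆ Ioo 0 1 := by
      intro t ht
      rcases ht with ⟨h1, h2⟩
      constructor
      · exact lt_of_le_of_lt (le_min (by norm_num) hx.1.le) h1
      · exact lt_of_le_of_lt h2 (max_lt (by norm_num) hx.2)
    calc ∫ s in (1/2:ℝ)..x, b s / a s ≤ ‖∫ s in (1/2:ℝ)..x, b s / a s‖ := le_abs_self _
    _ ≤ ∫ s in Ι (1/2:ℝ) x, ‖b s / a s‖ := intervalIntegral.norm_integral_le_integral_norm_uIoc
    _ ≤ ∫ s in Ioo (0:ℝ) 1, |b s / a s| := by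
        simp only [Real.norm_eq_abs]
        refine setIntegral_mono_set hba.abs (ae_of_all _ fun t => abs_nonneg _) ?_
        exact HasSubset.Subset.eventuallyLE huIoc
  -- measurability
  have hvm : AEStronglyMeasurable v μ :=
    ContinuousOn.aestronglyMeasurable (fun x hx => (hv x hx).continuousAt.continuousWithinAt) hIoo
  have hηu'm : AEStronglyMeasurable (fun x => η x * u' x) μ :=
    ContinuousOn.aestronglyMeasurable (fun x hx => (hw x hx).continuousAt.continuousWithinAt) hIoo
  have hu'm : AEStronglyMeasurable u' μ := by
    refine ((measurable_deriv u).aestronglyMeasurable.restrict).congr ?_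
    exact (ae_restrict_iff' hIoo).2 (ae_of_all _ fun x hx => (hu x hx).deriv)
  have hv'm : AEStronglyMeasurable v' μ := by
    refine ((measurable_deriv v).aestronglyMeasurable.restrict).congr ?_
    exact (ae_restrict_iff' hIoo).2 (ae_of_all _ fun x hx => (hv x hx).deriv)
  have hwm : AEStronglyMeasurable w μ := by
    refine ((measurable_deriv (fun t => η t * u' t)).aestronglyMeasurable.restrict).congr ?_
    exact (ae_restrict_iff' hIoo).2 (ae_of_all _ fun x hx => (hw x hx).deriv)
  -- σ positive on (0,1)
  have hσpos : ∀ x ∈ Ioo (0:ℝ) 1, 0 < σ x := fun x hx => by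
    rw [hσ x]; exact div_pos (ha_pos x ⟨hx.1, hx.2.le⟩) (hηpos x)
  -- integrability of the two products
  have hwv_int : IntegrableOn (fun x => w x * v x) (Ioo 0 1) := by
    refine Integrable.mono' ((hAu.add hvL2σ).div_const 2) (hwm.mul hvm) ?_
    refine (ae_restrict_iff' hIoo).2 (ae_of_all _ fun x hx => ?_)
    have hs : 0 < σ x := hσpos x hx
    simp only [Pi.add_apply]
    rw [Real.norm_eq_abs]
    rw [← add_div, div_div, le_div_iff₀ (by positivity)]
    have h2 := two_mul_le_add_sq (σ x * w x) (v x)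
    have habs : |w x * v x| * σ x = |σ x * w x * v x| := by
      rw [abs_mul, abs_mul, abs_mul, abs_of_pos hs]; ring
    rcases abs_cases (σ x * w x * v x) with ⟨he, _⟩ | ⟨he, _⟩ <;>
      nlinarith [two_mul_le_add_sq (σ x * w x) (v x), two_mul_le_add_sq (σ x * w x) (-(v x))]
  have hηu'v'_int : IntegrableOn (fun x => η x * u' x * v' x) (Ioo 0 1) := by
    refine Integrable.mono' (((hu'L2.add hv'L2)).const_mul (M/2)) (hηu'm.mul hv'm) ?_
    refine (ae_restrict_iff' hIoo).2 (ae_of_all _ fun x hx => ?_)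
    have hη1 : 0 < η x := hηpos x
    have hη2 : η x ≤ M := hMb x hx
    simp only [Pi.add_apply]
    rw [Real.norm_eq_abs, abs_mul, abs_mul, abs_of_pos hη1]
    calc η x * |u' x| * |v' x| ≤ M * |u' x| * |v' x| := by
          have := mul_nonneg (abs_nonneg (u' x)) (abs_nonneg (v' x))
          nlinarith
    _ ≤ M / 2 * (u' x ^ 2 + v' x ^ 2) := by
          nlinarith [two_mul_le_add_sq (|u' x|) (|v' x|), hM0.le, sq_abs (u' x), sq_abs (v' x),
            abs_nonneg (u' x), abs_nonneg (v' x)]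
  have hconst : IntegrableOn (fun _ : ℝ => (1:ℝ)) (Ioo 0 1) := by
    refine integrableOn_const ?_
    rw [Real.volume_Ioo]; exact ENNReal.ofReal_ne_top
  have hv'_int : IntegrableOn v' (Ioo 0 1) := by
    refine Integrable.mono' ((hv'L2.add hconst).div_const 2) hv'm ?_
    refine (ae_restrict_iff' hIoo).2 (ae_of_all _ fun x hx => ?_)
    simp only [Pi.add_apply]
    rw [Real.norm_eq_abs]
    rcases abs_cases (v' x) with ⟨he, _⟩ | ⟨he, _⟩ <;> nlinarith [sq_nonneg (v' x - 1), sq_nonneg (v' x + 1)]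
  -- Cauchy–Schwarz bound for ∫ |v'| over subsets
  set Cv : ℝ := Real.sqrt (∫ x in Ioo (0:ℝ) 1, v' x ^ 2) with hCvdef
  have hCv0 : 0 ≤ Cv := Real.sqrt_nonneg _
  have habs_int : ∀ s : Set ℝ, s ⊆ Ioo 0 1 → MeasurableSet s → volume s ≠ ⊤ →
      ∫ t in s, |v' t| ≤ Real.sqrt (volume s).toReal * Cv := by
    intro s hsub hms hvol
    have hasm : AEStronglyMeasurable v' (volume.restrict s) :=
      hv'm.mono_measure (Measure.restrict_mono hsub le_rfl)
    have h1 := cs_aux hvol hasm (hv'L2.mono_set hsub)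
    have h2 : Real.sqrt (∫ t in s, v' t ^ 2) ≤ Cv := by
      refine Real.sqrt_le_sqrt ?_
      exact setIntegral_mono_set hv'L2 (ae_of_all _ fun t => sq_nonneg _) hsub.eventuallyLE
    calc ∫ t in s, |v' t| ≤ Real.sqrt (volume s).toReal * Real.sqrt (∫ t in s, v' t ^ 2) := h1
    _ ≤ Real.sqrt (volume s).toReal * Cv :=
        mul_le_mul_of_nonneg_left h2 (Real.sqrt_nonneg _)
  -- pointwise bounds on |v| near the endpoints
  have hv_near0 : ∀ x ∈ Ioo (0:ℝ) 1, |v x| ≤ Real.sqrt x * Cv := by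
    intro x hx
    have hsub : Ioc (0:ℝ) x ⊆ Ioo 0 1 := fun t ht => ⟨ht.1, lt_of_le_of_lt ht.2 hx.2⟩
    have hIoc : ∫ t in Ioc (0:ℝ) x, |v' t| ≤ Real.sqrt x * Cv := by
      have h := habs_int (Ioc 0 x) hsub measurableSet_Ioc (by
        rw [Real.volume_Ioc]; exact ENNReal.ofReal_ne_top)
      rwa [Real.volume_Ioc, sub_zero, ENNReal.toReal_ofReal hx.1.le] at h
    have key : ∀ δ ∈ Ioo (0:ℝ) x, |v x| ≤ |v δ| + Real.sqrt x * Cv := by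
      intro δ hδ
      have hicc : uIcc δ x ⊆ Ioo 0 1 := by
        rw [uIcc_of_le hδ.2.le]
        exact fun t ht => ⟨lt_of_lt_of_le hδ.1 ht.1, lt_of_le_of_lt ht.2 hx.2⟩
      have hftc : ∫ t in δ..x, v' t = v x - v δ :=
        intervalIntegral.integral_eq_sub_of_hasDerivAt (fun t ht => hv t (hicc ht))
          ((hv'_int.mono_set hicc).intervalIntegrable)
      have hb : |v x - v δ| ≤ ∫ t in Ioc (0:ℝ) x, |v' t| := by
        rw [← hftc]
        calc |∫ t in δ..x, v' t| ≤ ∫ t in Ι δ x, |v' t| := by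
              simpa [Real.norm_eq_abs] using
                intervalIntegral.norm_integral_le_integral_norm_uIoc
                  (f := v') (a := δ) (b := x) (μ := volume)
        _ ≤ ∫ t in Ioc (0:ℝ) x, |v' t| := by
              refine setIntegral_mono_set ((hv'_int.mono_set hsub).abs)
                (ae_of_all _ fun t => abs_nonneg _) ?_
              rw [uIoc_of_le hδ.2.le]
              exact (Ioc_subset_Ioc_left hδ.1.le).eventuallyLE
      have htri := abs_sub_abs_le_abs_sub (v x) (v δ)
      have h4 : |v x - v δ| ≤ Real.sqrt x * Cv := le_trans hb hIoc
      linarith [abs_nonneg (v δ)]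
    have hne : (𝓝[Ioo (0:ℝ) x] (0:ℝ)).NeBot := by
      refine mem_closure_iff_nhdsWithin_neBot.1 ?_
      rw [closure_Ioo hx.1.ne]
      exact ⟨le_rfl, hx.1.le⟩
    have hvt : Tendsto (fun δ => |v δ| + Real.sqrt x * Cv) (𝓝[Ioo (0:ℝ) x] 0)
        (𝓝 (|v 0| + Real.sqrt x * Cv)) := by
      have hc : Tendsto v (𝓝[Icc (0:ℝ) 1] 0) (𝓝 (v 0)) :=
        hv_cont 0 (left_mem_Icc.2 zero_le_one)
      have hmono : Tendsto v (𝓝[Ioo (0:ℝ) x] 0) (𝓝 (v 0)) :=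
        hc.mono_left (nhdsWithin_mono 0 fun t ht => ⟨ht.1.le, le_trans ht.2.le hx.2.le⟩)
      exact (hmono.abs).add tendsto_const_nhds
    rw [hv0, abs_zero, zero_add] at hvt
    exact ge_of_tendsto hvt (eventually_nhdsWithin_of_forall key)
  have hv_near1 : ∀ x ∈ Ioo (0:ℝ) 1, |v x| ≤ Real.sqrt (1 - x) * Cv := by
    intro x hx
    have hsub : Ioo x 1 ⊆ Ioo 0 1 := fun t ht => ⟨lt_trans hx.1 ht.1, ht.2⟩
    have hIoo2 : ∫ t in Ioo x 1, |v' t| ≤ Real.sqrt (1 - x) * Cv := by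
      have h := habs_int (Ioo x 1) hsub measurableSet_Ioo (by
        rw [Real.volume_Ioo]; exact ENNReal.ofReal_ne_top)
      rwa [Real.volume_Ioo, ENNReal.toReal_ofReal (by linarith [hx.2])] at h
    have key : ∀ δ ∈ Ioo x 1, |v x| ≤ |v δ| + Real.sqrt (1 - x) * Cv := by
      intro δ hδ
      have hicc : uIcc x δ ⊆ Ioo 0 1 := by
        rw [uIcc_of_le hδ.1.le]
        exact fun t ht => ⟨lt_of_lt_of_le hx.1 ht.1, lt_of_le_of_lt ht.2 hδ.2⟩
      have hftc : ∫ t in x..δ, v' t = v δ - v x :=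
        intervalIntegral.integral_eq_sub_of_hasDerivAt (fun t ht => hv t (hicc ht))
          ((hv'_int.mono_set hicc).intervalIntegrable)
      have hb : |v δ - v x| ≤ ∫ t in Ioo x 1, |v' t| := by
        rw [← hftc]
        calc |∫ t in x..δ, v' t| ≤ ∫ t in Ι x δ, |v' t| := by
              simpa [Real.norm_eq_abs] using
                intervalIntegral.norm_integral_le_integral_norm_uIoc
                  (f := v') (a := x) (b := δ) (μ := volume)
        _ ≤ ∫ t in Ioo x 1, |v' t| := by
              refine setIntegral_mono_set ((hv'_int.mono_set hsub).abs)
                (ae_of_all _ fun t => abs_nonneg _) ?_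
              rw [uIoc_of_le hδ.1.le]
              have hss : Ioc x δ ⊆ Ioo x 1 := fun t ht => ⟨ht.1, lt_of_le_of_lt ht.2 hδ.2⟩
              exact hss.eventuallyLE
      have htri := abs_sub_abs_le_abs_sub (v x) (v δ)
      have h4 : |v δ - v x| ≤ Real.sqrt (1 - x) * Cv := le_trans hb hIoo2
      have habs2 : |v x - v δ| = |v δ - v x| := abs_sub_comm _ _
      linarith [abs_nonneg (v δ)]
    have hne : (𝓝[Ioo x 1] (1:ℝ)).NeBot := by
      refine mem_closure_iff_nhdsWithin_neBot.1 ?_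
      rw [closure_Ioo hx.2.ne]
      exact ⟨hx.2.le, le_rfl⟩
    have hvt : Tendsto (fun δ => |v δ| + Real.sqrt (1 - x) * Cv) (𝓝[Ioo x 1] 1)
        (𝓝 (|v 1| + Real.sqrt (1 - x) * Cv)) := by
      have hc : Tendsto v (𝓝[Icc (0:ℝ) 1] 1) (𝓝 (v 1)) :=
        hv_cont 1 (right_mem_Icc.2 zero_le_one)
      have hmono : Tendsto v (𝓝[Ioo x 1] 1) (𝓝 (v 1)) :=
        hc.mono_left (nhdsWithin_mono 1 fun t ht => ⟨le_trans hx.1.le ht.1.le, ht.2.le⟩)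
      exact (hmono.abs).add tendsto_const_nhds
    rw [hv1, abs_zero, zero_add] at hvt
    exact ge_of_tendsto hvt (eventually_nhdsWithin_of_forall key)
  -- choose sequences along which the boundary terms vanish
  have hδmem : ∀ n : ℕ, min (1/(n+1:ℝ)) (1/2) ∈ Ioo (0:ℝ) 1 :=
    fun n => ⟨lt_min (by positivity) (by norm_num),
      lt_of_le_of_lt (min_le_right _ _) (by norm_num)⟩
  have hex0 : ∀ n : ℕ, ∃ x ∈ Ioo (0:ℝ) (min (1/(n+1:ℝ)) (1/2)), x * u' x ^ 2 < 1/(n+1:ℝ) :=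
    fun n => freq_small_zero hu'L2 (by positivity) (hδmem n)
  have hex1 : ∀ n : ℕ, ∃ y ∈ Ioo (1 - min (1/(n+1:ℝ)) (1/2)) 1,
      (1 - y) * u' y ^ 2 < 1/(n+1:ℝ) :=
    fun n => freq_small_one hu'L2 (by positivity) (hδmem n)
  choose X hXmem hXsmall using hex0
  choose Y hYmem hYsmall using hex1
  have hX01 : ∀ n, X n ∈ Ioo (0:ℝ) 1 := fun n =>
    ⟨(hXmem n).1, lt_trans (hXmem n).2 (hδmem n).2⟩
  have hY01 : ∀ n, Y n ∈ Ioo (0:ℝ) 1 := fun n =>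
    ⟨lt_trans (by linarith [(hδmem n).2] : (0:ℝ) < 1 - min (1/(n+1:ℝ)) (1/2)) (hYmem n).1,
      (hYmem n).2⟩
  have hXY : ∀ n, X n < Y n := by
    intro n
    have h1 : X n < min (1/(n+1:ℝ)) (1/2) := (hXmem n).2
    have h2 : min (1/(n+1:ℝ)) (1/2) ≤ 1/2 := min_le_right _ _
    have h3 : 1 - min (1/(n+1:ℝ)) (1/2) < Y n := (hYmem n).1
    linarith
  have hseq : Tendsto (fun n : ℕ => 1/(n+1:ℝ)) atTop (𝓝 0) :=
    tendsto_one_div_add_atTop_nhds_zero_nat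
  have htendX : Tendsto X atTop (𝓝 0) := by
    refine squeeze_zero (fun n => (hXmem n).1.le) (fun n => ?_) hseq
    exact le_trans (hXmem n).2.le (min_le_left _ _)
  have htendY : Tendsto Y atTop (𝓝 1) := by
    refine tendsto_of_tendsto_of_tendsto_of_le_of_le
      (g := fun n : ℕ => 1 - 1/(n+1:ℝ)) (h := fun _ : ℕ => (1:ℝ)) ?_ ?_ ?_ ?_
    · simpa using tendsto_const_nhds.sub hseq
    · exact tendsto_const_nhds
    · intro n
      have := min_le_left (1/(n+1:ℝ)) (1/2)
      linarith [(hYmem n).1]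
    · exact fun n => (hYmem n).2.le
  have hsqseq : Tendsto (fun n : ℕ => Real.sqrt (1/(n+1:ℝ))) atTop (𝓝 0) := by
    have h := (Real.continuous_sqrt.tendsto 0).comp hseq
    rw [Real.sqrt_zero] at h
    exact h
  -- boundary terms vanish along the sequences
  have hgt : Tendsto (fun n : ℕ => M * (Real.sqrt (1/(n+1:ℝ)) * Cv)) atTop (𝓝 0) := by
    simpa using (hsqseq.mul_const Cv).const_mul M
  have hFX : Tendsto (fun n => η (X n) * u' (X n) * v (X n)) atTop (𝓝 0) := by
    refine squeeze_zero_norm (fun n => ?_) hgt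
    have hx := hX01 n
    have h1 : |u' (X n)| * Real.sqrt (X n) ≤ Real.sqrt (1/(n+1:ℝ)) := by
      rw [← Real.sqrt_sq_eq_abs, ← Real.sqrt_mul (sq_nonneg _)]
      exact Real.sqrt_le_sqrt (by nlinarith [hXsmall n])
    have h2 : |v (X n)| ≤ Real.sqrt (X n) * Cv := hv_near0 _ hx
    have h3 : |u' (X n)| * |v (X n)| ≤ Real.sqrt (1/(n+1:ℝ)) * Cv :=
      calc |u' (X n)| * |v (X n)| ≤ |u' (X n)| * (Real.sqrt (X n) * Cv) :=
            mul_le_mul_of_nonneg_left h2 (abs_nonneg _)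
      _ = (|u' (X n)| * Real.sqrt (X n)) * Cv := by ring
      _ ≤ Real.sqrt (1/(n+1:ℝ)) * Cv := mul_le_mul_of_nonneg_right h1 hCv0
    rw [Real.norm_eq_abs]
    calc |η (X n) * u' (X n) * v (X n)| = η (X n) * (|u' (X n)| * |v (X n)|) := by
          rw [abs_mul, abs_mul, abs_of_pos (hηpos _)]; ring
    _ ≤ M * (Real.sqrt (1/(n+1:ℝ)) * Cv) :=
          mul_le_mul (hMb _ hx) h3 (mul_nonneg (abs_nonneg _) (abs_nonneg _)) hM0.le
  have hFY : Tendsto (fun n => η (Y n) * u' (Y n) * v (Y n)) atTop (𝓝 0) := by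
    refine squeeze_zero_norm (fun n => ?_) hgt
    have hy := hY01 n
    have h1 : |u' (Y n)| * Real.sqrt (1 - Y n) ≤ Real.sqrt (1/(n+1:ℝ)) := by
      rw [← Real.sqrt_sq_eq_abs, ← Real.sqrt_mul (sq_nonneg _)]
      exact Real.sqrt_le_sqrt (by nlinarith [hYsmall n])
    have h2 : |v (Y n)| ≤ Real.sqrt (1 - Y n) * Cv := hv_near1 _ hy
    have h3 : |u' (Y n)| * |v (Y n)| ≤ Real.sqrt (1/(n+1:ℝ)) * Cv :=
      calc |u' (Y n)| * |v (Y n)| ≤ |u' (Y n)| * (Real.sqrt (1 - Y n) * Cv) :=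
            mul_le_mul_of_nonneg_left h2 (abs_nonneg _)
      _ = (|u' (Y n)| * Real.sqrt (1 - Y n)) * Cv := by ring
      _ ≤ Real.sqrt (1/(n+1:ℝ)) * Cv := mul_le_mul_of_nonneg_right h1 hCv0
    rw [Real.norm_eq_abs]
    calc |η (Y n) * u' (Y n) * v (Y n)| = η (Y n) * (|u' (Y n)| * |v (Y n)|) := by
          rw [abs_mul, abs_mul, abs_of_pos (hηpos _)]; ring
    _ ≤ M * (Real.sqrt (1/(n+1:ℝ)) * Cv) :=
          mul_le_mul (hMb _ hy) h3 (mul_nonneg (abs_nonneg _) (abs_nonneg _)) hM0.le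
  -- fundamental theorem of calculus on [X n, Y n]
  have hfint : IntegrableOn (fun t => w t * v t + η t * u' t * v' t) (Ioo 0 1) :=
    hwv_int.add hηu'v'_int
  have hFTC : ∀ n, ∫ t in X n..Y n, (w t * v t + η t * u' t * v' t) =
      η (Y n) * u' (Y n) * v (Y n) - η (X n) * u' (X n) * v (X n) := by
    intro n
    have hicc : uIcc (X n) (Y n) ⊆ Ioo 0 1 := by
      rw [uIcc_of_le (hXY n).le]
      exact fun t ht => ⟨lt_of_lt_of_le (hX01 n).1 ht.1, lt_of_le_of_lt ht.2 (hY01 n).2⟩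
    exact intervalIntegral.integral_eq_sub_of_hasDerivAt
      (fun t ht => (hw t (hicc ht)).mul (hv t (hicc ht)))
      ((hfint.mono_set hicc).intervalIntegrable)
  -- pass to the limit in the interval of integration
  have hlim1 : Tendsto (fun n => ∫ t in X n..Y n, (w t * v t + η t * u' t * v' t)) atTop
      (𝓝 (∫ t in Ioo (0:ℝ) 1, (w t * v t + η t * u' t * v' t))) := by
    have heq : ∀ n, ∫ t in X n..Y n, (w t * v t + η t * u' t * v' t) =
        ∫ t, (Ioc (X n) (Y n)).indicator (fun t => w t * v t + η t * u' t * v' t) t ∂μ := by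
      intro n
      have hsub : Ioc (X n) (Y n) ⊆ Ioo 0 1 := fun t ht =>
        ⟨lt_trans (hX01 n).1 ht.1, lt_of_le_of_lt ht.2 (hY01 n).2⟩
      rw [intervalIntegral.integral_of_le (hXY n).le, integral_indicator measurableSet_Ioc,
        hμdef, Measure.restrict_restrict measurableSet_Ioc, inter_eq_self_of_subset_left hsub]
    rw [show (fun n => ∫ t in X n..Y n, (w t * v t + η t * u' t * v' t)) = fun n =>
        ∫ t, (Ioc (X n) (Y n)).indicator (fun t => w t * v t + η t * u' t * v' t) t ∂μ from
      funext heq]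
    refine tendsto_integral_of_dominated_convergence
      (F := fun n => (Ioc (X n) (Y n)).indicator (fun t => w t * v t + η t * u' t * v' t))
      (f := fun t => w t * v t + η t * u' t * v' t) (μ := μ)
      (fun t => ‖w t * v t + η t * u' t * v' t‖)
      (fun n => hfint.aestronglyMeasurable.indicator measurableSet_Ioc) hfint.norm
      (fun n => ae_of_all _ fun t => norm_indicator_le_norm_self (fun t => w t * v t + η t * u' t * v' t) t) ?_
    refine (ae_restrict_iff' hIoo).2 (ae_of_all _ fun t ht => ?_)
    have h1 : ∀ᶠ n in atTop, X n < t := htendX.eventually_lt_const ht.1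
    have h2 : ∀ᶠ n in atTop, t < Y n := htendY.eventually_const_lt ht.2
    refine Tendsto.congr' ?_ tendsto_const_nhds
    filter_upwards [h1, h2] with n hn1 hn2
    have hmem : t ∈ Ioc (X n) (Y n) := ⟨hn1, hn2.le⟩
    exact (Set.indicator_of_mem hmem (fun t => w t * v t + η t * u' t * v' t)).symm
  have hlim2 : Tendsto (fun n => ∫ t in X n..Y n, (w t * v t + η t * u' t * v' t)) atTop
      (𝓝 0) := by
    have h := hFY.sub hFX
    rw [sub_zero] at h
    exact h.congr fun n => (hFTC n).symm
  have hzero : ∫ t in Ioo (0:ℝ) 1, (w t * v t + η t * u' t * v' t) = 0 :=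
    tendsto_nhds_unique hlim1 hlim2
  have hsplit : ∫ t in Ioo (0:ℝ) 1, (w t * v t + η t * u' t * v' t) =
      (∫ t in Ioo (0:ℝ) 1, w t * v t) + ∫ t in Ioo (0:ℝ) 1, η t * u' t * v' t :=
    integral_add hwv_int hηu'v'_int
  have hL : ∫ x in (0:ℝ)..1, (σ x * w x) * v x * (1 / σ x) =
      ∫ t in Ioo (0:ℝ) 1, w t * v t := by
    rw [intervalIntegral.integral_of_le zero_le_one, integral_Ioc_eq_integral_Ioo]
    refine setIntegral_congr_fun hIoo fun x hx => ?_
    have hs := (hσpos x hx).ne'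
    field_simp
  have hR : ∫ x in (0:ℝ)..1, η x * u' x * v' x =
      ∫ t in Ioo (0:ℝ) 1, η t * u' t * v' t := by
    rw [intervalIntegral.integral_of_le zero_le_one, integral_Ioc_eq_integral_Ioo]
  rw [hL, hR]
  linarith [hzero, hsplit]
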